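/- For every real η > 0 with η ≠ 1, one has (2√η/(η−1))·arcsin((η−1)/(η+1)) < 1. -/

import Mathlib

open Real

lemma aux_theta_cos_lt_sin {θ : ℝ} (h1 : 0 < θ) (h2 : θ < Real.pi / 2) :
    θ * Real.cos θ < Real.sin θ := by
  have hc : 0 < Real.cos θ := Real.cos_pos_of_mem_Ioo
    ⟨by linarith [Real.pi_pos], h2⟩
  have ht := Real.lt_tan h1 h2
  rw [Real.tan_eq_sin_div_cos] at ht
  calc θ * Real.cos θ < (Real.sin θ / Real.cos θ) * Real.cos θ := by
        exact mul_lt_mul_of_pos_right ht hc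
    _ = Real.sin θ := by field_simp

/-- The non-interacting IVC susceptibility ratio is strictly less than 1 for anisotropy η ≠ 1:
`(2√η/(η−1))·arcsin((η−1)/(η+1)) < 1`. -/
theorem ivc_susceptibility_lt_valley (η : ℝ) (hη : 0 < η) (hne : η ≠ 1) :
    (2 * Real.sqrt η / (η - 1)) * Real.arcsin ((η - 1) / (η + 1)) < 1 := by
  set x : ℝ := (η - 1) / (η + 1) with hx
  have hηp1 : (0:ℝ) < η + 1 := by linarith
  have hs : 0 < Real.sqrt η := Real.sqrt_pos.mpr hη
  have hx1 : x < 1 := by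
    rw [hx, div_lt_one hηp1]; linarith
  have hxm1 : -1 < x := by
    rw [hx, lt_div_iff₀ hηp1]; linarith
  have hsq : Real.sqrt (1 - x ^ 2) = 2 * Real.sqrt η / (η + 1) := by
    have h1 : (1 : ℝ) - x ^ 2 = (2 * Real.sqrt η / (η + 1)) ^ 2 := by
      have : Real.sqrt η ^ 2 = η := Real.sq_sqrt hη.le
      rw [hx]
      field_simp
      nlinarith [this]
    rw [h1, Real.sqrt_sq (by positivity)]
  have hcos : Real.cos (Real.arcsin x) = 2 * Real.sqrt η / (η + 1) := by
    rw [Real.cos_arcsin]; exact hsq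
  have hsin : Real.sin (Real.arcsin x) = x := Real.sin_arcsin hxm1.le hx1.le
  rcases lt_or_gt_of_ne hne with hlt | hgt
  · -- η < 1 : x < 0
    have hxneg : x < 0 := div_neg_of_neg_of_pos (by linarith) hηp1
    set θ : ℝ := -Real.arcsin x with hθ
    have hθpos : 0 < θ := by
      have : 0 < Real.arcsin (-x) := Real.arcsin_pos.mpr (by linarith)
      rw [Real.arcsin_neg] at this
      simpa [hθ] using this
    have hθlt : θ < Real.pi / 2 := by
      have := (Real.neg_pi_div_two_lt_arcsin (x := x)).mpr hxm1
      simp only [hθ]; linarith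
    have key := aux_theta_cos_lt_sin hθpos hθlt
    rw [hθ, Real.cos_neg, Real.sin_neg, hcos, hsin] at key
    -- key : -arcsin x * (2√η/(η+1)) < -x
    have harc : Real.arcsin x * (2 * Real.sqrt η ) > (η - 1) := by
      have hxval : -x = (1 - η) / (η + 1) := by rw [hx]; ring
      rw [hxval, ← mul_div_assoc] at key
      have := (div_lt_div_iff_of_pos_right hηp1).mp key
      nlinarith
    have hd : η - 1 < 0 := by linarith
    rw [div_mul_eq_mul_div, div_lt_one_iff]
    right; right
    exact ⟨hd, by nlinarith⟩
  · -- η > 1 : x > 0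
    have hxpos : 0 < x := div_pos (by linarith) hηp1
    set θ : ℝ := Real.arcsin x with hθ
    have hθpos : 0 < θ := Real.arcsin_pos.mpr hxpos
    have hθlt : θ < Real.pi / 2 := by
      have := Real.arcsin_le_pi_div_two x
      rcases lt_or_eq_of_le this with h | h
      · exact h
      · exfalso
        have : Real.sin θ = 1 := by rw [hθ, h]; exact Real.sin_pi_div_two
        rw [hθ, hsin] at this; linarith
    have key := aux_theta_cos_lt_sin hθpos hθlt
    rw [hθ, hcos, hsin] at key
    have harc : Real.arcsin x * (2 * Real.sqrt η) < (η - 1) := by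
      have := mul_lt_mul_of_pos_right key hηp1
      rw [mul_assoc, div_mul_cancel₀ _ (ne_of_gt hηp1)] at this
      have hxval : x * (η + 1) = η - 1 := by
        rw [hx]; field_simp
      nlinarith
    have hd : 0 < η - 1 := by linarith
    rw [div_mul_eq_mul_div, div_lt_one hd]
    nlinarith
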